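/- Let n ≥ k ≥ 1 be integers. For any probability mass function p = (p₁,…,pₙ) on [n] = {1,…,n}, let X₁, X₂, … be an i.i.d. sequence distributed according to p, and let T_k^p be the least r ≥ 1 such that at least k distinct values appear among X₁,…,X_r. Then E[T_k^p] ≥ E[T_k^u], where u = (1/n,…,1/n) is the uniform distribution and expectations are taken in [0,∞]. That is, among all channel distributions, the uniform distribution minimizes the expected sample size needed to collect k distinct coupons out of n. -/

import Mathlib

open MeasureTheory Finset
open scoped ENNReal

/-- The first time `r ≥ 1` (as an element of `[0,∞]`, with value `∞` if there is no such time)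
at which the condition `cond r ω` holds. -/
noncomputable def firstTime {Ω : Type*} (cond : ℕ → Ω → Prop) (ω : Ω) : ℝ≥0∞ :=
  sInf {x : ℝ≥0∞ | ∃ r : ℕ, x = (r : ℝ≥0∞) ∧ 1 ≤ r ∧ cond r ω}

namespace CoverAux


lemma key_pow (x y δ : ℝ≥0∞) (h : x ≤ y) (m : ℕ) :
    (x + δ) ^ m + y ^ m ≤ x ^ m + (y + δ) ^ m := by
  rw [add_pow, add_pow, Finset.sum_range_succ, Finset.sum_range_succ]
  simp only [Nat.sub_self, pow_zero, Nat.choose_self, Nat.cast_one, mul_one]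
  rw [add_right_comm, add_comm (x ^ m) _]
  gcongr

variable {n : ℕ}

noncomputable def w {r : ℕ} (p : Fin n → ℝ≥0∞) (a : Fin r → Fin n) : ℝ≥0∞ := ∏ t, p (a t)

noncomputable def badSet (n k r : ℕ) : Finset (Fin r → Fin n) :=
  univ.filter (fun a => ((univ : Finset (Fin r)).image a).card < k)

noncomputable def g (p : Fin n → ℝ≥0∞) (k r : ℕ) : ℝ≥0∞ := ∑ a ∈ badSet n k r, w p a

section LemA

variable {k r : ℕ} {i j : Fin n} (b : Fin r → Fin n)

/-- the pattern determined by `b` (which takes value `i` on `M`) and `J ⊆ M` (positions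
changed to `j`). -/
def patt (J : Finset (Fin r)) (j : Fin n) : Fin r → Fin n := fun t => if t ∈ J then j else b t

lemma image_patt (hij : i ≠ j) (hbj : ∀ t, b t ≠ j) {J : Finset (Fin r)}
    (hJ : J ⊆ univ.filter (fun t => b t = i)) :
    (univ : Finset (Fin r)).image (patt b J j)
      = ((univ \ univ.filter (fun t => b t = i)).image b)
        ∪ (if J = univ.filter (fun t => b t = i) then ∅ else {i})
        ∪ (if J = ∅ then ∅ else {j}) := by
  classical
  set M := univ.filter (fun t => b t = i) with hM
  have hMi : ∀ t ∈ M, b t = i := fun t ht => (mem_filter.mp ht).2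
  have hsplit : (univ : Finset (Fin r)) = ((univ \ M) ∪ (M \ J)) ∪ J := by
    ext t
    simp only [mem_union, mem_sdiff, mem_univ, true_and]
    by_cases h1 : t ∈ J
    · simp [h1]
    · by_cases h2 : t ∈ M <;> simp [h1, h2]
  conv_lhs => rw [hsplit]
  rw [image_union, image_union]
  congr 1
  · congr 1
    · apply image_congr
      intro t ht
      have ht' : t ∈ univ \ M := ht
      have htM : t ∉ M := (mem_sdiff.mp ht').2
      have htJ : t ∉ J := fun h => htM (hJ h)
      simp [patt, htJ]
    · by_cases hJM : J = M
      · simp [hJM]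
      · have hne : (M \ J).Nonempty := by
          rw [sdiff_nonempty]
          intro hsub
          exact hJM (subset_antisymm hJ hsub)
        rw [if_neg hJM]
        have : (M \ J).image (patt b J j) = (M \ J).image (fun _ => i) := by
          apply image_congr
          intro t ht
          have ht' : t ∈ M \ J := ht
          have h2 := mem_sdiff.mp ht'
          simp [patt, h2.2, hMi t h2.1]
        rw [this, image_const hne]
  · by_cases hJ0 : J = ∅
    · simp [hJ0]
    · have hne : J.Nonempty := nonempty_iff_ne_empty.mpr hJ0
      rw [if_neg hJ0]
      have : J.image (patt b J j) = J.image (fun _ => j) := by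
        apply image_congr
        intro t ht
        have ht' : t ∈ J := ht
        simp [patt, ht']
      rw [this, image_const hne]

lemma card_image_patt (hij : i ≠ j) (hbj : ∀ t, b t ≠ j) {J : Finset (Fin r)}
    (hJ : J ⊆ univ.filter (fun t => b t = i)) :
    ((univ : Finset (Fin r)).image (patt b J j)).card
      = ((univ \ univ.filter (fun t => b t = i)).image b).card
        + ((if J = univ.filter (fun t => b t = i) then 0 else 1)
          + (if J = ∅ then 0 else 1)) := by
  classical
  set M := univ.filter (fun t => b t = i) with hM
  set D := (univ \ M).image b with hD
  have hiD : i ∉ D := by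
    intro hmem
    obtain ⟨t, ht, hbt⟩ := mem_image.mp hmem
    exact (mem_sdiff.mp ht).2 (mem_filter.mpr ⟨mem_univ t, hbt⟩)
  have hjD : j ∉ D := by
    intro hmem
    obtain ⟨t, ht, hbt⟩ := mem_image.mp hmem
    exact hbj t hbt
  rw [image_patt b hij hbj hJ]
  have hd1 : Disjoint D (if J = M then (∅ : Finset (Fin n)) else {i}) := by
    split
    · simp
    · simp [Finset.disjoint_singleton_right, hiD]
  have hd2 : Disjoint (D ∪ (if J = M then (∅ : Finset (Fin n)) else {i}))
      (if J = ∅ then (∅ : Finset (Fin n)) else {j}) := by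
    by_cases hJ0 : J = ∅
    · simp [hJ0]
    · rw [if_neg hJ0, Finset.disjoint_singleton_right, mem_union]
      push_neg
      refine ⟨hjD, ?_⟩
      split
      · simp
      · simp only [Finset.mem_singleton]
        exact fun h => hij h.symm
  have c2 : (if J = M then (∅ : Finset (Fin n)) else {i}).card = (if J = M then 0 else 1) := by
    split <;> simp
  have c3 : (if J = ∅ then (∅ : Finset (Fin n)) else {j}).card = (if J = ∅ then 0 else 1) := by
    split <;> simp
  rw [card_union_of_disjoint hd2, card_union_of_disjoint hd1, c2, c3, add_assoc]

lemma w_patt (p : Fin n → ℝ≥0∞) {J : Finset (Fin r)}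
    (hJ : J ⊆ univ.filter (fun t => b t = i)) :
    w p (patt b J j)
      = (∏ t ∈ univ \ univ.filter (fun t => b t = i), p (b t))
        * (p i ^ ((univ.filter (fun t => b t = i)) \ J).card * p j ^ J.card) := by
  classical
  set M := univ.filter (fun t => b t = i) with hM
  have hMs : M ⊆ univ := subset_univ M
  have h1 : w p (patt b J j) = (∏ t ∈ univ \ M, p (patt b J j t)) * ∏ t ∈ M, p (patt b J j t) := by
    rw [w, ← Finset.prod_sdiff hMs]
  have h2 : ∏ t ∈ univ \ M, p (patt b J j t) = ∏ t ∈ univ \ M, p (b t) := by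
    apply prod_congr rfl
    intro t ht
    have htM : t ∉ M := (mem_sdiff.mp ht).2
    have htJ : t ∉ J := fun h => htM (hJ h)
    simp [patt, htJ]
  have h3 : ∏ t ∈ M, p (patt b J j t) = p i ^ (M \ J).card * p j ^ J.card := by
    rw [← Finset.prod_sdiff hJ]
    congr 1
    · rw [Finset.prod_congr rfl (fun t ht => ?_), Finset.prod_const]
      have := mem_sdiff.mp ht
      simp [patt, this.2, (mem_filter.mp this.1).2]
    · rw [Finset.prod_congr rfl (fun t ht => ?_), Finset.prod_const]
      simp [patt, ht]
  rw [h1, h2, h3]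

end LemA


section LemAMain

variable {k r : ℕ}

lemma lemA (p q : Fin n → ℝ≥0∞) (i j : Fin n) (hij : i ≠ j)
    (hpq : ∀ l, l ≠ i → l ≠ j → p l = q l)
    (hsum : q i + q j = p i + p j)
    (hi : p i ≤ q i) (hj : p i ≤ q j) (hfin : p i ≠ ∞) :
    g q k r ≤ g (n := n) p k r := by
  classical
  have hkey : ∀ m : ℕ, q i ^ m + q j ^ m ≤ p i ^ m + p j ^ m := by
    intro m
    rcases le_total (q i) (q j) with hle | hle
    · obtain ⟨δ, hδ⟩ := exists_add_of_le hi
      have hpj : p j = q j + δ := by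
        have h1 : p i + (δ + q j) = p i + p j := by
          calc p i + (δ + q j) = (p i + δ) + q j := by ring
          _ = q i + q j := by rw [← hδ]
          _ = p i + p j := hsum
        have h2 := (ENNReal.add_right_inj hfin).mp h1
        rw [← h2, add_comm]
      calc q i ^ m + q j ^ m = (p i + δ) ^ m + q j ^ m := by rw [← hδ]
      _ ≤ p i ^ m + (q j + δ) ^ m := key_pow _ _ _ hj m
      _ = p i ^ m + p j ^ m := by rw [← hpj]
    · obtain ⟨δ, hδ⟩ := exists_add_of_le hj
      have hpj : p j = q i + δ := by
        have h1 : p i + (δ + q i) = p i + p j := by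
          calc p i + (δ + q i) = q i + (p i + δ) := by ring
          _ = q i + q j := by rw [← hδ]
          _ = p i + p j := hsum
        have h2 := (ENNReal.add_right_inj hfin).mp h1
        rw [← h2, add_comm]
      calc q i ^ m + q j ^ m = q j ^ m + q i ^ m := add_comm _ _
      _ = (p i + δ) ^ m + q i ^ m := by rw [← hδ]
      _ ≤ p i ^ m + (q i + δ) ^ m := key_pow _ _ _ hi m
      _ = p i ^ m + p j ^ m := by rw [← hpj]
  set e : (Fin r → Fin n) → (Fin r → Fin n) := fun a t => if a t = j then i else a t with he
  have hg : ∀ pp : Fin n → ℝ≥0∞, g (n := n) pp k r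
      = ∑ b : Fin r → Fin n, ∑ a ∈ univ.filter (fun a => e a = b),
          (if ((univ : Finset (Fin r)).image a).card < k then w pp a else 0) := by
    intro pp
    rw [g, badSet, sum_filter]
    rw [sum_fiberwise_of_maps_to (fun a _ => mem_univ (e a))]
  rw [hg p, hg q]
  apply Finset.sum_le_sum
  intro b _
  by_cases hjb : ∀ t, b t ≠ j
  swap
  · push_neg at hjb
    obtain ⟨t0, ht0⟩ := hjb
    have hempty : univ.filter (fun a => e a = b) = ∅ := by
      apply filter_eq_empty_iff.mpr
      intro a _ hab
      have h3 : e a t0 = j := by rw [hab, ht0]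
      simp only [he] at h3
      split_ifs at h3 with h4
      · exact hij h3
      · exact h4 h3
    simp [hempty]
  · set M : Finset (Fin r) := univ.filter (fun t => b t = i) with hM
    set D : Finset (Fin n) := (univ \ M).image b with hD
    have hW : ∀ pp : Fin n → ℝ≥0∞, (∀ l, l ≠ i → l ≠ j → p l = pp l) →
        ∏ t ∈ univ \ M, pp (b t) = ∏ t ∈ univ \ M, p (b t) := by
      intro pp hppq
      refine prod_congr rfl fun t ht => ?_
      have hbi : b t ≠ i := by
        intro hcontr
        exact (mem_sdiff.mp ht).2 (mem_filter.mpr ⟨mem_univ t, hcontr⟩)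
      exact (hppq _ hbi (hjb t)).symm
    have trans : ∀ pp : Fin n → ℝ≥0∞,
        (∑ a ∈ univ.filter (fun a => e a = b),
          (if ((univ : Finset (Fin r)).image a).card < k then w pp a else 0))
        = ∑ J ∈ M.powerset,
            (if D.card + ((if J = M then 0 else 1) + (if J = ∅ then 0 else 1)) < k
              then (∏ t ∈ univ \ M, pp (b t)) * (pp i ^ (M \ J).card * pp j ^ J.card)
              else 0) := by
      intro pp
      refine sum_nbij' (fun a => univ.filter (fun t => a t = j)) (fun J => patt b J j)
        ?_ ?_ ?_ ?_ ?_
      · intro a ha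
        rw [mem_powerset]
        intro t ht
        have hat : a t = j := (mem_filter.mp ht).2
        have heab : e a = b := (mem_filter.mp ha).2
        have : e a t = i := by simp only [he]; rw [if_pos hat]
        rw [heab] at this
        exact mem_filter.mpr ⟨mem_univ t, this⟩
      · intro J hJ
        rw [mem_powerset] at hJ
        refine mem_filter.mpr ⟨mem_univ _, ?_⟩
        funext t
        by_cases htJ : t ∈ J
        · have : patt b J j t = j := by simp [patt, htJ]
          simp only [he, this, if_pos rfl]
          exact ((mem_filter.mp (hJ htJ)).2).symm
        · have hpt : patt b J j t = b t := by simp [patt, htJ]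
          simp only [he, hpt]
          rw [if_neg (hjb t)]
      · intro a ha
        have heab : e a = b := (mem_filter.mp ha).2
        funext t
        by_cases hat : a t = j
        · simp [patt, hat, mem_filter]
        · have htJ : t ∉ univ.filter (fun t => a t = j) := by
            simp [mem_filter, hat]
          simp only [patt, if_neg htJ]
          rw [← heab]
          simp only [he]
          rw [if_neg hat]
      · intro J hJ
        rw [mem_powerset] at hJ
        ext t
        simp only [mem_filter, mem_univ, true_and]
        constructor
        · intro hpt
          by_contra htJ
          have : patt b J j t = b t := by simp [patt, htJ]
          rw [this] at hpt
          exact hjb t hpt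
        · intro htJ
          simp [patt, htJ]
      · intro a ha
        have heab : e a = b := (mem_filter.mp ha).2
        have hsub : univ.filter (fun t => a t = j) ⊆ M := by
          intro t ht
          have hat : a t = j := (mem_filter.mp ht).2
          have h5 : e a t = i := by simp only [he]; rw [if_pos hat]
          rw [heab] at h5
          exact mem_filter.mpr ⟨mem_univ t, h5⟩
        have hsub' : univ.filter (fun t => a t = j) ⊆ univ.filter (fun t => b t = i) := by
          rw [← hM]; exact hsub
        have hpatt : patt b (univ.filter (fun t => a t = j)) j = a := by
          funext t
          by_cases hat : a t = j
          · simp [patt, hat, mem_filter]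
          · have htJ : t ∉ univ.filter (fun t => a t = j) := by simp [mem_filter, hat]
            simp only [patt, if_neg htJ]
            rw [← heab]
            simp only [he]
            rw [if_neg hat]
        rw [← hpatt, card_image_patt b hij hjb hsub', w_patt b pp hsub']
        rw [← hM, ← hD]
        simp only [hpatt]
    rw [trans p, trans q]
    rw [hW q hpq, hW p (fun _ _ _ => rfl)]
    set W : ℝ≥0∞ := ∏ t ∈ univ \ M, p (b t) with hWdef
    by_cases hM0 : M = ∅
    · rw [hM0, Finset.powerset_empty, Finset.sum_singleton]
      simp
    · by_cases h2 : D.card + 2 < k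
      · have hctrue : ∀ J ∈ M.powerset,
            D.card + ((if J = M then 0 else 1) + (if J = ∅ then 0 else 1)) < k := by
          intro J _
          have : (if J = M then 0 else 1) + (if J = ∅ then 0 else 1) ≤ 2 := by
            split_ifs <;> omega
          omega
        have heq : ∀ pp : Fin n → ℝ≥0∞,
            (∑ J ∈ M.powerset,
              if D.card + ((if J = M then 0 else 1) + (if J = ∅ then 0 else 1)) < k
                then W * (pp i ^ (M \ J).card * pp j ^ J.card)
                else 0)
            = W * (pp j + pp i) ^ M.card := by
          intro pp
          rw [Finset.sum_congr rfl (fun J hJ => if_pos (hctrue J hJ)), ← Finset.mul_sum]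
          congr 1
          calc ∑ J ∈ M.powerset, pp i ^ (M \ J).card * pp j ^ J.card
              = ∑ J ∈ M.powerset, (∏ _t ∈ J, pp j) * ∏ _t ∈ M \ J, pp i := by
                refine sum_congr rfl fun J _ => ?_
                rw [prod_const, prod_const, mul_comm]
            _ = ∏ _t ∈ M, (pp j + pp i) := (Finset.prod_add _ _ M).symm
            _ = (pp j + pp i) ^ M.card := prod_const _
        rw [heq q, heq p]
        have hqp : q j + q i = p j + p i := by
          rw [add_comm (q j), add_comm (p j)]; exact hsum
        rw [hqp]
      · by_cases h1 : D.card + 1 < k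
        · have hMne : (∅ : Finset (Fin r)) ≠ M := fun h => hM0 h.symm
          have hred : ∀ pp : Fin n → ℝ≥0∞,
              (∑ J ∈ M.powerset,
                if D.card + ((if J = M then 0 else 1) + (if J = ∅ then 0 else 1)) < k
                  then W * (pp i ^ (M \ J).card * pp j ^ J.card)
                  else 0)
              = W * pp j ^ M.card + W * pp i ^ M.card := by
            intro pp
            have h0 : ∀ J ∈ M.powerset, J ≠ M ∧ J ≠ ∅ →
                (if D.card + ((if J = M then 0 else 1) + (if J = ∅ then 0 else 1)) < k
                  then W * (pp i ^ (M \ J).card * pp j ^ J.card)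
                  else 0) = 0 := by
              intro J _ hJne
              rw [if_neg hJne.1, if_neg hJne.2, if_neg (by omega : ¬ D.card + (1 + 1) < k)]
            rw [Finset.sum_eq_add M ∅ hM0 h0
              (fun hmem => absurd (mem_powerset_self M) hmem)
              (fun hmem => absurd (empty_mem_powerset M) hmem)]
            have e1 : (if D.card + ((if M = M then 0 else 1) + (if M = ∅ then 0 else 1)) < k
                then W * (pp i ^ (M \ M).card * pp j ^ M.card) else 0) = W * pp j ^ M.card := by
              rw [if_pos rfl, if_neg hM0, Finset.sdiff_self, card_empty, pow_zero, one_mul,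
                if_pos (by omega : D.card + (0 + 1) < k)]
            have e2 : (if D.card + ((if (∅ : Finset (Fin r)) = M then 0 else 1)
                  + (if (∅ : Finset (Fin r)) = ∅ then 0 else 1)) < k
                then W * (pp i ^ (M \ (∅ : Finset (Fin r))).card
                  * pp j ^ (∅ : Finset (Fin r)).card) else 0) = W * pp i ^ M.card := by
              rw [if_neg hMne, if_pos rfl, Finset.sdiff_empty, card_empty, pow_zero, mul_one,
                if_pos (by omega : D.card + (1 + 0) < k)]
            rw [e1, e2]
          rw [hred q, hred p, ← mul_add, ← mul_add]
          exact mul_le_mul_right (by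
            rw [add_comm (q j ^ M.card), add_comm (p j ^ M.card)]
            exact hkey M.card) _
        · have hz : ∀ pp : Fin n → ℝ≥0∞, ∀ J ∈ M.powerset,
              (if D.card + ((if J = M then 0 else 1) + (if J = ∅ then 0 else 1)) < k
                then W * (pp i ^ (M \ J).card * pp j ^ J.card)
                else 0) = 0 := by
            intro pp J _
            have hu : 1 ≤ (if J = M then 0 else 1) + (if J = ∅ then 0 else 1) := by
              by_cases hA : J = M
              · rw [if_pos hA, if_neg (by rw [hA]; exact hM0)]
              · rw [if_neg hA]
                exact Nat.le_add_right 1 _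
            rw [if_neg (by omega)]
          rw [Finset.sum_eq_zero (hz q), Finset.sum_eq_zero (hz p)]

end LemAMain


lemma lemB {k r : ℕ} (hn : n ≠ 0) :
    ∀ (c : ℕ) (p : Fin n → ℝ≥0∞), (∑ l, p l = 1) →
      (univ.filter (fun l => p l ≠ (n : ℝ≥0∞)⁻¹)).card ≤ c →
      g (n := n) (fun _ => (n : ℝ≥0∞)⁻¹) k r ≤ g (n := n) p k r := by
  classical
  have hninv_ne_top : ((n : ℝ≥0∞))⁻¹ ≠ ∞ := by
    simp [ENNReal.inv_ne_top, hn]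
  have hsum_inv : ∑ _l : Fin n, ((n : ℝ≥0∞))⁻¹ = 1 := by
    rw [Finset.sum_const, card_univ, Fintype.card_fin, nsmul_eq_mul]
    exact ENNReal.mul_inv_cancel (by exact_mod_cast hn) (by simp)
  intro c
  induction c with
  | zero =>
    intro p hp hcard
    have hfe : univ.filter (fun l => p l ≠ (n : ℝ≥0∞)⁻¹) = ∅ := card_eq_zero.mp
      (Nat.le_zero.mp hcard)
    have : p = fun _ => (n : ℝ≥0∞)⁻¹ := by
      funext l
      by_contra hne
      have : l ∈ univ.filter (fun l => p l ≠ (n : ℝ≥0∞)⁻¹) := mem_filter.mpr ⟨mem_univ l, hne⟩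
      rw [hfe] at this
      exact absurd this (notMem_empty l)
    rw [this]
  | succ c ih =>
    intro p hp hcard
    by_cases hunif : p = fun _ => (n : ℝ≥0∞)⁻¹
    · rw [hunif]
    · have hne : ∃ l, p l ≠ (n : ℝ≥0∞)⁻¹ := by
        by_contra hc
        push_neg at hc
        exact hunif (funext hc)
      obtain ⟨l0, hl0⟩ := hne
      have hptop : ∀ l, p l ≠ ∞ := by
        intro l hl
        have : p l ≤ 1 := hp ▸ Finset.single_le_sum (fun _ _ => zero_le) (mem_univ l)
        rw [hl] at this
        exact absurd this (by simp)
      have hsum_erase : ∀ l : Fin n, p l + ∑ t ∈ univ.erase l, p t = 1 := by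
        intro l
        rw [Finset.add_sum_erase _ p (mem_univ l)]
        exact hp
      have hsum_erase_inv : ∀ l : Fin n,
          ((n : ℝ≥0∞))⁻¹ + ∑ _t ∈ univ.erase l, ((n : ℝ≥0∞))⁻¹ = 1 := by
        intro l
        rw [Finset.add_sum_erase _ (fun _ => ((n : ℝ≥0∞))⁻¹) (mem_univ l)]
        exact hsum_inv
      have herase_ne_top : ∀ l : Fin n, (∑ _t ∈ univ.erase l, ((n : ℝ≥0∞))⁻¹) ≠ ∞ := by
        intro l
        refine (lt_of_le_of_lt ?_ (by norm_num : (1:ℝ≥0∞) < ∞)).ne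
        rw [← hsum_erase_inv l]
        exact le_add_self
      -- existence of a coordinate strictly below 1/n
      have hlt : ∃ i, p i < (n : ℝ≥0∞)⁻¹ := by
        by_contra hc
        push_neg at hc
        have hgt0 : (n : ℝ≥0∞)⁻¹ < p l0 := lt_of_le_of_ne (hc l0) (Ne.symm hl0)
        have h1 : (1 : ℝ≥0∞) < 1 := by
          calc (1 : ℝ≥0∞) = (n : ℝ≥0∞)⁻¹ + ∑ _t ∈ univ.erase l0, ((n : ℝ≥0∞))⁻¹ :=
                (hsum_erase_inv l0).symm
          _ < p l0 + ∑ _t ∈ univ.erase l0, ((n : ℝ≥0∞))⁻¹ :=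
                (ENNReal.add_lt_add_right (herase_ne_top l0) hgt0)
          _ ≤ p l0 + ∑ t ∈ univ.erase l0, p t := by
                gcongr with t ht
                exact hc t
          _ = 1 := hsum_erase l0
        exact absurd h1 (lt_irrefl 1)
      have hgt : ∃ j, (n : ℝ≥0∞)⁻¹ < p j := by
        by_contra hc
        push_neg at hc
        have hlt0 : p l0 < (n : ℝ≥0∞)⁻¹ := lt_of_le_of_ne (hc l0) hl0
        have h1 : (1 : ℝ≥0∞) < 1 := by
          calc (1 : ℝ≥0∞) = p l0 + ∑ t ∈ univ.erase l0, p t := (hsum_erase l0).symm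
          _ ≤ p l0 + ∑ _t ∈ univ.erase l0, ((n : ℝ≥0∞))⁻¹ := by
                gcongr with t ht
                exact hc t
          _ < (n : ℝ≥0∞)⁻¹ + ∑ _t ∈ univ.erase l0, ((n : ℝ≥0∞))⁻¹ :=
                (ENNReal.add_lt_add_right (herase_ne_top l0) hlt0)
          _ = 1 := hsum_erase_inv l0
        exact absurd h1 (lt_irrefl 1)
      obtain ⟨i, hilt⟩ := hlt
      obtain ⟨j, hjgt⟩ := hgt
      have hij : i ≠ j := by
        intro hcontr
        rw [hcontr] at hilt
        exact absurd (hilt.trans hjgt) (lt_irrefl _)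
      set q : Fin n → ℝ≥0∞ :=
        Function.update (Function.update p i ((n : ℝ≥0∞))⁻¹) j (p i + p j - (n : ℝ≥0∞)⁻¹)
        with hq
      have hqi : q i = (n : ℝ≥0∞)⁻¹ := by
        rw [hq, Function.update_of_ne hij, Function.update_self]
      have hqj : q j = p i + p j - (n : ℝ≥0∞)⁻¹ := by
        rw [hq, Function.update_self]
      have hqother : ∀ l, l ≠ i → l ≠ j → q l = p l := by
        intro l hli hlj
        rw [hq, Function.update_of_ne hlj, Function.update_of_ne hli]
      have hinv_le : (n : ℝ≥0∞)⁻¹ ≤ p i + p j := le_add_of_nonneg_of_le (zero_le) hjgt.le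
      have hqsum : q i + q j = p i + p j := by
        rw [hqi, hqj, add_tsub_cancel_of_le hinv_le]
      -- apply lemA
      have hstep : g (n := n) q k r ≤ g (n := n) p k r := by
        refine lemA p q i j hij (fun l hli hlj => (hqother l hli hlj).symm) hqsum ?_ ?_ (hptop i)
        · rw [hqi]; exact hilt.le
        · rw [hqj]
          calc p i = p i + (n : ℝ≥0∞)⁻¹ - (n : ℝ≥0∞)⁻¹ :=
                (ENNReal.add_sub_cancel_right hninv_ne_top).symm
            _ ≤ p i + p j - (n : ℝ≥0∞)⁻¹ :=
                tsub_le_tsub_right (add_le_add (le_refl _) hjgt.le) _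
      refine le_trans (ih q ?_ ?_) hstep
      · -- q sums to 1
        have h1 : ∑ l, q l = q j + ∑ t ∈ univ.erase j, q t := by
          rw [Finset.add_sum_erase _ q (mem_univ j)]
        have h2 : ∑ t ∈ univ.erase j, q t = q i + ∑ t ∈ (univ.erase j).erase i, q t := by
          rw [Finset.add_sum_erase _ q (mem_erase.mpr ⟨hij, mem_univ i⟩)]
        have h3 : ∑ t ∈ (univ.erase j).erase i, q t = ∑ t ∈ (univ.erase j).erase i, p t := by
          refine sum_congr rfl fun t ht => ?_
          have h4 := mem_erase.mp ht
          have h5 := mem_erase.mp h4.2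
          exact hqother t h4.1 h5.1
        have hp1 : ∑ l, p l = p j + (p i + ∑ t ∈ (univ.erase j).erase i, p t) := by
          rw [Finset.add_sum_erase _ p (mem_erase.mpr ⟨hij, mem_univ i⟩)]
          rw [Finset.add_sum_erase _ p (mem_univ j)]
        rw [h1, h2, h3]
        calc q j + (q i + ∑ t ∈ (univ.erase j).erase i, p t)
            = (q i + q j) + ∑ t ∈ (univ.erase j).erase i, p t := by ring
          _ = (p i + p j) + ∑ t ∈ (univ.erase j).erase i, p t := by rw [hqsum]
          _ = p j + (p i + ∑ t ∈ (univ.erase j).erase i, p t) := by ring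
          _ = 1 := by rw [← hp1]; exact hp
      · -- cardinality decreases
        have hsub : univ.filter (fun l => q l ≠ (n : ℝ≥0∞)⁻¹)
            ⊆ (univ.filter (fun l => p l ≠ (n : ℝ≥0∞)⁻¹)).erase i := by
          intro l hl
          have hql : q l ≠ (n : ℝ≥0∞)⁻¹ := (mem_filter.mp hl).2
          have hli : l ≠ i := by
            intro hcontr
            rw [hcontr, hqi] at hql
            exact hql rfl
          refine mem_erase.mpr ⟨hli, mem_filter.mpr ⟨mem_univ l, ?_⟩⟩
          by_cases hlj : l = j
          · rw [hlj]
            exact hjgt.ne'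
          · rw [← hqother l hli hlj]
            exact hql
        have hi_mem : i ∈ univ.filter (fun l => p l ≠ (n : ℝ≥0∞)⁻¹) :=
          mem_filter.mpr ⟨mem_univ i, hilt.ne⟩
        calc (univ.filter (fun l => q l ≠ (n : ℝ≥0∞)⁻¹)).card
            ≤ ((univ.filter (fun l => p l ≠ (n : ℝ≥0∞)⁻¹)).erase i).card := card_le_card hsub
          _ = (univ.filter (fun l => p l ≠ (n : ℝ≥0∞)⁻¹)).card - 1 := card_erase_of_mem hi_mem
          _ ≤ c := by omega


section Meas

variable {n k : ℕ}

lemma measurable_cyl {r : ℕ} (a : Fin r → Fin n) :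
    MeasurableSet {ω : ℕ → Fin n | ∀ t : Fin r, ω (t : ℕ) = a t} := by
  have h : {ω : ℕ → Fin n | ∀ t : Fin r, ω (t : ℕ) = a t}
      = ⋂ t : Fin r, (fun ω : ℕ → Fin n => ω (t : ℕ)) ⁻¹' {a t} := by
    ext ω
    simp [Set.mem_iInter]
  rw [h]
  exact MeasurableSet.iInter fun t => measurable_pi_apply _ (MeasurableSet.singleton _)

lemma event_eq {r : ℕ} (P : (Fin r → Fin n) → Prop) [DecidablePred P] :
    {ω : ℕ → Fin n | P (fun t : Fin r => ω (t : ℕ))}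
      = ⋃ a ∈ (univ.filter P : Finset (Fin r → Fin n)), {ω : ℕ → Fin n | ∀ t : Fin r, ω (t : ℕ) = a t} := by
  ext ω
  simp only [Set.mem_setOf_eq, Set.mem_iUnion, exists_prop, Finset.mem_coe]
  constructor
  · intro h
    exact ⟨fun t => ω t, mem_filter.mpr ⟨mem_univ _, h⟩, fun t => rfl⟩
  · rintro ⟨a, ha, hω⟩
    have h2 : (fun t : Fin r => ω (t : ℕ)) = a := funext hω
    rw [h2]
    exact (mem_filter.mp ha).2

lemma cyl_disjoint {r : ℕ} :
    Set.PairwiseDisjoint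
      (↑(univ.filter (fun a : Fin r → Fin n => ¬ k ≤ ((univ : Finset (Fin r)).image a).card)))
      (fun a : Fin r → Fin n => {ω : ℕ → Fin n | ∀ t : Fin r, ω (t : ℕ) = a t}) := by
  intro a _ a' _ hne
  refine Set.disjoint_left.mpr ?_
  intro ω hω hω'
  exact hne (funext fun t => (hω t).symm.trans (hω' t))

lemma measure_bad {r : ℕ} (μ : Measure (ℕ → Fin n)) (p : Fin n → ℝ≥0∞)
    (hμ : ∀ a : Fin r → Fin n,
      μ {ω : ℕ → Fin n | ∀ t : Fin r, ω (t : ℕ) = a t} = ∏ t, p (a t)) :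
    μ {ω : ℕ → Fin n | ¬ k ≤ ((univ : Finset (Fin r)).image (fun j : Fin r => ω (j : ℕ))).card}
      = g (n := n) p k r := by
  classical
  have h1 : {ω : ℕ → Fin n | ¬ k ≤ ((univ : Finset (Fin r)).image (fun j : Fin r => ω (j : ℕ))).card}
      = ⋃ a ∈ (univ.filter (fun a : Fin r → Fin n => ¬ k ≤ ((univ : Finset (Fin r)).image a).card)
          : Finset (Fin r → Fin n)),
          {ω : ℕ → Fin n | ∀ t : Fin r, ω (t : ℕ) = a t} :=
    event_eq (fun a : Fin r → Fin n => ¬ k ≤ ((univ : Finset (Fin r)).image a).card)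
  rw [h1, measure_biUnion_finset cyl_disjoint (fun a _ => measurable_cyl a)]
  have h2 : univ.filter (fun a : Fin r → Fin n => ¬ k ≤ ((univ : Finset (Fin r)).image a).card)
      = badSet n k r := by
    apply filter_congr
    intro a _
    simp [Nat.not_le]
  rw [h2, g]
  exact sum_congr rfl fun a _ => hμ a

lemma measurable_bad {r : ℕ} :
    MeasurableSet
      {ω : ℕ → Fin n | ¬ k ≤ ((univ : Finset (Fin r)).image (fun j : Fin r => ω (j : ℕ))).card} := by
  classical
  rw [event_eq (fun a : Fin r → Fin n => ¬ k ≤ ((univ : Finset (Fin r)).image a).card)]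
  exact Set.Finite.measurableSet_biUnion (Finset.finite_toSet _) (fun a _ => measurable_cyl a)

end Meas

section FT

lemma firstTime_eq_tsum {Ω : Type*} (cond : ℕ → Ω → Prop)
    (hmono : ∀ (r r' : ℕ) (ω : Ω), r ≤ r' → cond r ω → cond r' ω)
    (h0 : ∀ ω, ¬ cond 0 ω) (ω : Ω) :
    firstTime cond ω = ∑' r : ℕ, Set.indicator {ω' | ¬ cond r ω'} (fun _ => (1 : ℝ≥0∞)) ω := by
  classical
  by_cases hex : ∃ r, cond r ω
  · have hcondN : cond (Nat.find hex) ω := Nat.find_spec hex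
    set N := Nat.find hex with hN
    have hN1 : 1 ≤ N := by
      rcases Nat.eq_zero_or_pos N with h | h
      · rw [h] at hcondN
        exact absurd hcondN (h0 ω)
      · exact h
    have hiff : ∀ r, cond r ω ↔ N ≤ r := by
      intro r
      constructor
      · intro h
        exact Nat.find_min' hex h
      · intro h
        exact hmono N r ω h hcondN
    have hlhs : firstTime cond ω = (N : ℝ≥0∞) := by
      apply le_antisymm
      · exact sInf_le ⟨N, rfl, hN1, hcondN⟩
      · apply le_sInf
        rintro x ⟨r, rfl, hr1, hcr⟩
        exact_mod_cast (hiff r).mp hcr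
    rw [hlhs]
    have hind : ∀ r : ℕ, Set.indicator {ω' | ¬ cond r ω'} (fun _ => (1 : ℝ≥0∞)) ω
        = if r < N then 1 else 0 := by
      intro r
      by_cases h : cond r ω
      · rw [Set.indicator_of_notMem (by simpa using h), if_neg (by
          have := (hiff r).mp h
          omega)]
      · rw [Set.indicator_of_mem (by simpa using h), if_pos (by
          have := (hiff r).not.mp h
          omega)]
    rw [tsum_congr hind]
    rw [tsum_eq_sum (s := Finset.range N)
      (fun r hr => by rw [if_neg (by simpa using hr)])]
    rw [Finset.sum_congr rfl (fun r hr => if_pos (mem_range.mp hr))]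
    simp
  · have hempty : {x : ℝ≥0∞ | ∃ r : ℕ, x = (r : ℝ≥0∞) ∧ 1 ≤ r ∧ cond r ω} = ∅ := by
      ext x
      simp only [Set.mem_setOf_eq, Set.mem_empty_iff_false, iff_false, not_exists]
      rintro r ⟨_, _, hc⟩
      exact hex ⟨r, hc⟩
    rw [firstTime, hempty, sInf_empty]
    have hall : ∀ r : ℕ, Set.indicator {ω' | ¬ cond r ω'} (fun _ => (1 : ℝ≥0∞)) ω = 1 :=
      fun r => Set.indicator_of_mem (show ω ∈ {ω' | ¬ cond r ω'} from fun hc => hex ⟨r, hc⟩) _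
    rw [tsum_congr hall]
    exact (ENNReal.tsum_const_eq_top_of_ne_zero one_ne_zero).symm

end FT

end CoverAux

/-- Let `n ≥ k ≥ 1`.  For a probability mass function `p` on `[n]`, let `T_k^p` be the least
`r ≥ 1` such that at least `k` distinct values appear among the first `r` coordinates of the
coordinate process on `[n]^ℕ`, equipped with the infinite product measure `μp` of `p`
(characterized by its values on cylinder sets).  Then `E[T_k^p] ≥ E[T_k^u]`, where
`u = (1/n,…,1/n)` is the uniform distribution (with product measure `μu`), expectations being
taken in `[0,∞]`: the uniform distribution minimizes the expected coverage sample size. -/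
theorem uniform_minimizes_expected_coverage_depth (n k : ℕ) (hk : 1 ≤ k) (hkn : k ≤ n)
    (p : Fin n → ℝ≥0∞) (hp : ∑ i, p i = 1) (μp μu : Measure (ℕ → Fin n))
    (hμp : ∀ (m : ℕ) (a : Fin m → Fin n),
      μp {ω : ℕ → Fin n | ∀ i : Fin m, ω (i : ℕ) = a i} = ∏ i : Fin m, p (a i))
    (hμu : ∀ (m : ℕ) (a : Fin m → Fin n),
      μu {ω : ℕ → Fin n | ∀ i : Fin m, ω (i : ℕ) = a i} = ∏ _i : Fin m, ((n : ℝ≥0∞))⁻¹) :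
    ∫⁻ ω, firstTime
        (fun r ω => k ≤ ((Finset.univ : Finset (Fin r)).image (fun j => ω (j : ℕ))).card) ω ∂μu ≤
      ∫⁻ ω, firstTime
        (fun r ω => k ≤ ((Finset.univ : Finset (Fin r)).image (fun j => ω (j : ℕ))).card) ω ∂μp := by
  classical
  have hn : n ≠ 0 := by omega
  have hmono : ∀ (r r' : ℕ) (ω : ℕ → Fin n), r ≤ r' →
      (k ≤ ((Finset.univ : Finset (Fin r)).image (fun j : Fin r => ω (j : ℕ))).card) →
      (k ≤ ((Finset.univ : Finset (Fin r')).image (fun j : Fin r' => ω (j : ℕ))).card) := by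
    intro r r' ω hrr h
    refine le_trans h (card_le_card ?_)
    intro x hx
    obtain ⟨t, _, rfl⟩ := mem_image.mp hx
    exact mem_image.mpr ⟨Fin.castLE hrr t, mem_univ _, by simp⟩
  have h0 : ∀ ω : ℕ → Fin n,
      ¬ (k ≤ ((Finset.univ : Finset (Fin 0)).image (fun j : Fin 0 => ω (j : ℕ))).card) := by
    intro ω
    simp only [Finset.univ_eq_empty, Finset.image_empty, Finset.card_empty]
    omega
  have hint : ∀ (μ : Measure (ℕ → Fin n)) (pp : Fin n → ℝ≥0∞),
      (∀ (m : ℕ) (a : Fin m → Fin n),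
        μ {ω : ℕ → Fin n | ∀ i : Fin m, ω (i : ℕ) = a i} = ∏ i, pp (a i)) →
      ∫⁻ ω, firstTime
          (fun r ω => k ≤ ((Finset.univ : Finset (Fin r)).image (fun j => ω (j : ℕ))).card) ω ∂μ
        = ∑' r : ℕ, CoverAux.g (n := n) pp k r := by
    intro μ pp hμ
    rw [lintegral_congr (CoverAux.firstTime_eq_tsum
      (fun r ω => k ≤ ((Finset.univ : Finset (Fin r)).image (fun j => ω (j : ℕ))).card)
      hmono h0)]
    rw [lintegral_tsum (fun r =>
      (measurable_const.indicator (CoverAux.measurable_bad (n := n) (k := k) (r := r))).aemeasurable)]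
    refine tsum_congr fun r => ?_
    rw [lintegral_indicator_const (CoverAux.measurable_bad (n := n) (k := k) (r := r)), one_mul]
    exact CoverAux.measure_bad μ pp (hμ r)
  rw [hint μu (fun _ => ((n : ℝ≥0∞))⁻¹) (fun m a => hμu m a), hint μp p hμp]
  refine ENNReal.tsum_le_tsum fun r => ?_
  refine CoverAux.lemB hn n p hp ?_
  calc (univ.filter (fun l => p l ≠ (n : ℝ≥0∞)⁻¹)).card
      ≤ (univ : Finset (Fin n)).card := card_le_card (filter_subset _ _)
    _ = n := by simp
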